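/- arXiv:2101.05227 — 3 statements merged into one kernel-verified Lean document; each statement's English description precedes it below -/
import Mathlib

section
/- For w in the open unit disc, 0 < ε < 1, z in the closed unit disc, and k ∈ ℕ, one has |((ε·w + z)/(1 + ε·conj(w)·z))^k - z^k| ≤ 2(k+1)ε/(1 - ε). -/
open Complex

lemma aux_pow_sub_pow (u z : ℂ) (hu : ‖u‖ ≤ 1) (hz : ‖z‖ ≤ 1) (k : ℕ) :
    ‖u ^ k - z ^ k‖ ≤ k * ‖u - z‖ := by
  rw [← geom_sum₂_mul u z k, norm_mul]
  have h1 : ‖∑ i ∈ Finset.range k, u ^ i * z ^ (k - 1 - i)‖ ≤ k := by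
    calc ‖∑ i ∈ Finset.range k, u ^ i * z ^ (k - 1 - i)‖
        ≤ ∑ i ∈ Finset.range k, ‖u ^ i * z ^ (k - 1 - i)‖ := norm_sum_le _ _
      _ ≤ ∑ _i ∈ Finset.range k, 1 := by
          apply Finset.sum_le_sum
          intro i _
          rw [norm_mul, norm_pow, norm_pow]
          exact mul_le_one₀ (pow_le_one₀ (norm_nonneg u) hu)
            (pow_nonneg (norm_nonneg z) _) (pow_le_one₀ (norm_nonneg z) hz)
      _ = k := by simp
  exact mul_le_mul_of_nonneg_right h1 (norm_nonneg _)

theorem moebius_pow_sub_pow_bound (w : ℂ) (hw : ‖w‖ < 1) (ε : ℝ) (hε0 : 0 < ε) (hε1 : ε < 1)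
    (z : ℂ) (hz : ‖z‖ ≤ 1) (k : ℕ) :
    ‖(((ε : ℂ) * w + z) / (1 + (ε : ℂ) * (starRingEnd ℂ) w * z)) ^ k - z ^ k‖ ≤
      2 * (k + 1) * ε / (1 - ε) := by
  set a : ℂ := (ε : ℂ) * w with ha
  have hna : ‖a‖ ≤ ε := by
    rw [ha, norm_mul, Complex.norm_real, Real.norm_eq_abs, abs_of_pos hε0]
    nlinarith [norm_nonneg w]
  set d : ℂ := 1 + (ε : ℂ) * (starRingEnd ℂ) w * z with hd
  have hdz : d = 1 + (starRingEnd ℂ) a * z := by rw [hd, ha]; simp [mul_assoc]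
  have hnd : 1 - ε ≤ ‖d‖ := by
    have hle : ‖(starRingEnd ℂ) a * z‖ ≤ ε := by
      rw [norm_mul, RCLike.norm_conj]
      calc ‖a‖ * ‖z‖ ≤ ε * 1 := mul_le_mul hna hz (norm_nonneg z) hε0.le
        _ = ε := by ring
    calc 1 - ε ≤ 1 - ‖(starRingEnd ℂ) a * z‖ := by linarith
      _ ≤ ‖(1 : ℂ)‖ - ‖-((starRingEnd ℂ) a * z)‖ := by simp
      _ ≤ ‖1 - -((starRingEnd ℂ) a * z)‖ := norm_sub_norm_le _ _
      _ = ‖d‖ := by rw [hdz]; ring_nf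
  have hd0' : (0 : ℝ) < ‖d‖ := lt_of_lt_of_le (by linarith) hnd
  have hd0 : d ≠ 0 := by
    intro h; rw [h, norm_zero] at hd0'; linarith
  set u : ℂ := (a + z) / d with hu
  have hkey : Complex.normSq (a + z) ≤ Complex.normSq d := by
    have hident : Complex.normSq d - Complex.normSq (a + z)
        = (1 - Complex.normSq a) * (1 - Complex.normSq z) := by
      rw [hdz]
      simp only [Complex.normSq_apply, Complex.add_re, Complex.add_im, Complex.mul_re,
        Complex.mul_im, Complex.one_re, Complex.one_im, Complex.conj_re, Complex.conj_im]
      ring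
    have h1 : Complex.normSq a ≤ 1 := by
      rw [← Complex.sq_norm]; nlinarith [norm_nonneg a]
    have h2 : Complex.normSq z ≤ 1 := by
      rw [← Complex.sq_norm]; nlinarith [norm_nonneg z]
    nlinarith
  have hu1 : ‖u‖ ≤ 1 := by
    rw [hu, norm_div, div_le_one hd0']
    calc ‖a + z‖ = Real.sqrt (Complex.normSq (a + z)) := by
          rw [Complex.norm_def]
      _ ≤ Real.sqrt (Complex.normSq d) := Real.sqrt_le_sqrt hkey
      _ = ‖d‖ := by rw [Complex.norm_def]
  have hD : (1 + (starRingEnd ℂ) a * z) ≠ 0 := by rw [← hdz]; exact hd0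
  have huz : ‖u - z‖ ≤ 2 * ε / (1 - ε) := by
    have heq : u - z = (a - (starRingEnd ℂ) a * z ^ 2) / d := by
      rw [hu, hdz]
      rw [eq_div_iff hD, sub_mul, div_mul_cancel₀ _ hD]
      ring
    rw [heq, norm_div]
    have hz2 : ‖z‖ ^ 2 ≤ 1 := pow_le_one₀ (norm_nonneg z) hz
    have hnum : ‖a - (starRingEnd ℂ) a * z ^ 2‖ ≤ 2 * ε := by
      have hconj : ‖(starRingEnd ℂ) a * z ^ 2‖ = ‖a‖ * ‖z‖ ^ 2 := by
        rw [norm_mul, RCLike.norm_conj, norm_pow]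
      calc ‖a - (starRingEnd ℂ) a * z ^ 2‖
          ≤ ‖a‖ + ‖(starRingEnd ℂ) a * z ^ 2‖ := norm_sub_le _ _
        _ ≤ 2 * ε := by nlinarith [norm_nonneg a]
    exact div_le_div₀ (by linarith) hnum (by linarith) hnd
  calc ‖u ^ k - z ^ k‖ ≤ k * ‖u - z‖ := aux_pow_sub_pow u z hu1 hz k
    _ ≤ k * (2 * ε / (1 - ε)) := mul_le_mul_of_nonneg_left huz (Nat.cast_nonneg k)
    _ ≤ ((k : ℝ) + 1) * (2 * ε / (1 - ε)) := by
        apply mul_le_mul_of_nonneg_right (by linarith)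
        exact div_nonneg (by linarith) (by linarith)
    _ = 2 * (k + 1) * ε / (1 - ε) := by ring
end

section
/- Let μ be a positive Radon measure on the unit disc and K a μ-measurable function such that K and K(w)·log(1-|w|) are μ-integrable. Then the Hausdorff operator (H f)(z) = ∫_𝔻 K(w) f(φ_w(z)) dμ(w) is bounded on the Bloch space 𝓑 (with norm ‖f‖'_𝓑 = ‖f‖_𝓑 + |f(0)|), with operator norm at most ∫_𝔻 |K(w)|·(2 + (1/2)log((1+|w|)/(1-|w|))) dμ(w). -/
open Complex Metric Set MeasureTheory

noncomputable def moebius (w z : ℂ) : ℂ := (w - z) / (1 - (starRingEnd ℂ) w * z)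

/-- The Bloch seminorm values of `f` over the unit disc. -/
def blochSet (f : ℂ → ℂ) : Set ℝ := (fun z => (1 - ‖z‖ ^ 2) * ‖deriv f z‖) '' ball (0:ℂ) 1

/-- The Bloch norm `‖f‖'_𝓑 = ‖f‖_𝓑 + |f(0)|`. -/
noncomputable def blochNorm' (f : ℂ → ℂ) : ℝ := sSup (blochSet f) + ‖f 0‖

/-- The Hausdorff operator over the unit disc. -/
noncomputable def hausdorffOp (μ : Measure ℂ) (K : ℂ → ℂ) (f : ℂ → ℂ) (z : ℂ) : ℂ :=
  ∫ w in ball (0:ℂ) 1, K w * f (moebius w z) ∂μ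

lemma normSq_key (w z : ℂ) :
    normSq (1 - (starRingEnd ℂ) w * z) - normSq (w - z) = (1 - normSq w) * (1 - normSq z) := by
  simp only [Complex.normSq_apply, Complex.sub_re, Complex.sub_im, Complex.mul_re, Complex.mul_im,
    Complex.one_re, Complex.one_im, Complex.conj_re, Complex.conj_im]
  ring

lemma norm_sq_eq (x : ℂ) : ‖x‖ ^ 2 = normSq x := by
  rw [Complex.sq_norm]

lemma denom_ne {w z : ℂ} (hw : ‖w‖ < 1) (hz : ‖z‖ < 1) : 1 - (starRingEnd ℂ) w * z ≠ 0 := by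
  intro h
  have : ‖(starRingEnd ℂ) w * z‖ < 1 := by
    rw [norm_mul, RCLike.norm_conj]
    nlinarith [norm_nonneg w, norm_nonneg z]
  rw [sub_eq_zero] at h
  rw [← h] at this
  simp at this

lemma one_sub_sq_mo {w z : ℂ} (hw : ‖w‖ < 1) (hz : ‖z‖ < 1) :
    1 - ‖moebius w z‖ ^ 2 =
      (1 - ‖w‖ ^ 2) * (1 - ‖z‖ ^ 2) / ‖1 - (starRingEnd ℂ) w * z‖ ^ 2 := by
  have hd := denom_ne hw hz
  have hc : (0:ℝ) < normSq (1 - (starRingEnd ℂ) w * z) := Complex.normSq_pos.mpr hd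
  have h1 : ‖moebius w z‖ ^ 2 = ‖w - z‖ ^ 2 / ‖1 - (starRingEnd ℂ) w * z‖ ^ 2 := by
    rw [moebius, norm_div]; ring
  rw [h1]
  simp only [norm_sq_eq]
  rw [eq_div_iff hc.ne', sub_mul, div_mul_cancel₀ _ hc.ne']
  linarith [normSq_key w z]

lemma mo_mem_ball {w z : ℂ} (hw : w ∈ ball (0:ℂ) 1) (hz : z ∈ ball (0:ℂ) 1) :
    moebius w z ∈ ball (0:ℂ) 1 := by
  simp only [mem_ball, dist_zero_right] at *
  have hd := denom_ne hw hz
  have hc : (0:ℝ) < ‖1 - (starRingEnd ℂ) w * z‖ ^ 2 :=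
    pow_pos (norm_pos_iff.mpr hd) 2
  have key := one_sub_sq_mo hw hz
  have hw2 : ‖w‖ ^ 2 < 1 := by nlinarith [norm_nonneg w]
  have hz2 : ‖z‖ ^ 2 < 1 := by nlinarith [norm_nonneg z]
  have hpos : (0:ℝ) < (1 - ‖w‖ ^ 2) * (1 - ‖z‖ ^ 2) / ‖1 - (starRingEnd ℂ) w * z‖ ^ 2 :=
    div_pos (mul_pos (by linarith) (by linarith)) hc
  nlinarith [norm_nonneg (moebius w z)]

lemma mo_hasDerivAt {w z : ℂ} (hd : 1 - (starRingEnd ℂ) w * z ≠ 0) :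
    HasDerivAt (moebius w) ((((normSq w : ℝ) : ℂ) - 1) / (1 - (starRingEnd ℂ) w * z) ^ 2) z := by
  have h1 : HasDerivAt (fun z => w - z) (-1 : ℂ) z := by
    simpa using (hasDerivAt_id z).const_sub w
  have h2 : HasDerivAt (fun z => 1 - (starRingEnd ℂ) w * z) (-(starRingEnd ℂ) w) z := by
    simpa using ((hasDerivAt_id z).const_mul ((starRingEnd ℂ) w)).const_sub 1
  have := h1.div h2 hd
  have hcw : (starRingEnd ℂ) w * w = ((normSq w : ℝ) : ℂ) := by
    rw [mul_comm, Complex.mul_conj]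
  exact this.congr_deriv (by rw [← hcw]; ring)
lemma mo_deriv_norm {w z : ℂ} (hw : ‖w‖ < 1) (hz : ‖z‖ < 1) :
    (1 - ‖z‖ ^ 2) * ‖(((normSq w : ℝ) : ℂ) - 1) / (1 - (starRingEnd ℂ) w * z) ^ 2‖ =
      1 - ‖moebius w z‖ ^ 2 := by
  have hw2 : normSq w < 1 := by rw [← norm_sq_eq]; nlinarith [norm_nonneg w]
  have h1 : ‖(((normSq w : ℝ) : ℂ) - 1)‖ = 1 - ‖w‖ ^ 2 := by
    rw [norm_sq_eq]
    rw [show (((normSq w : ℝ) : ℂ) - 1) = (((normSq w - 1 : ℝ)) : ℂ) by push_cast; ring]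
    rw [Complex.norm_real, Real.norm_eq_abs, abs_of_nonpos (by linarith)]
    ring
  rw [norm_div, h1, norm_pow, one_sub_sq_mo hw hz]
  ring

lemma bloch_growth {f : ℂ → ℂ} {M : ℝ} (hf : DifferentiableOn ℂ f (ball (0:ℂ) 1))
    (hM : ∀ x ∈ ball (0:ℂ) 1, (1 - ‖x‖ ^ 2) * ‖deriv f x‖ ≤ M)
    {z : ℂ} (hz : z ∈ ball (0:ℂ) 1) :
    ‖f z‖ ≤ ‖f 0‖ + M * (1 / 2 * Real.log ((1 + ‖z‖) / (1 - ‖z‖))) := by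
  have hz' : ‖z‖ < 1 := by simpa [mem_ball, dist_zero_right] using hz
  set r := ‖z‖ with hr
  have hr0 : 0 ≤ r := norm_nonneg z
  have hM0 : 0 ≤ M := by
    have := hM 0 (by simp)
    simp at this
    exact le_trans (norm_nonneg _) this
  have hmem : ∀ t : ℝ, t ∈ Icc (0:ℝ) 1 → (t : ℂ) * z ∈ ball (0:ℂ) 1 := by
    intro t ht
    simp only [mem_ball, dist_zero_right, norm_mul, Complex.norm_real, Real.norm_eq_abs]
    calc |t| * ‖z‖ ≤ 1 * ‖z‖ := by
          apply mul_le_mul_of_nonneg_right _ hr0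
          rw [_root_.abs_of_nonneg ht.1]; exact ht.2
      _ < 1 := by simpa
  -- derivative of g t = f (t z)
  have hg : ∀ t ∈ uIcc (0:ℝ) 1,
      HasDerivAt (fun t : ℝ => f ((t : ℂ) * z)) (deriv f ((t:ℂ) * z) * z) t := by
    intro t ht
    rw [uIcc_of_le (by norm_num : (0:ℝ) ≤ 1)] at ht
    have hmem' := hmem t ht
    have hfd : HasDerivAt f (deriv f ((t:ℂ)*z)) ((t:ℂ)*z) :=
      (hf.differentiableAt (isOpen_ball.mem_nhds hmem')).hasDerivAt
    have hmul : HasDerivAt (fun s : ℂ => s * z) z (t:ℂ) := by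
      simpa using (hasDerivAt_id (t:ℂ)).mul_const z
    have := (hfd.comp (t:ℂ) hmul)
    exact HasDerivAt.comp_ofReal this
  -- continuity of deriv f on the ball
  have hdc : ContinuousOn (deriv f) (ball (0:ℂ) 1) := by
    have := (hf.analyticOnNhd isOpen_ball).deriv
    exact this.continuousOn
  have hcont : ContinuousOn (fun t : ℝ => deriv f ((t:ℂ) * z) * z) (Icc 0 1) := by
    apply ContinuousOn.mul _ continuousOn_const
    apply hdc.comp _ hmem
    exact (Complex.continuous_ofReal.mul continuous_const).continuousOn
  have hii : IntervalIntegrable (fun t : ℝ => deriv f ((t:ℂ) * z) * z) volume 0 1 :=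
    hcont.intervalIntegrable_of_Icc (by norm_num)
  have ftc := intervalIntegral.integral_eq_sub_of_hasDerivAt hg hii
  simp only [Complex.ofReal_one, Complex.ofReal_zero, one_mul, zero_mul] at ftc
  -- the bound function and its antiderivative
  set F : ℝ → ℝ := fun t => M * (1/2) * (Real.log (1 + r*t) - Real.log (1 - r*t)) with hF
  have hFd : ∀ t ∈ uIcc (0:ℝ) 1, HasDerivAt F (M * r / (1 - t^2*r^2)) t := by
    intro t ht
    rw [uIcc_of_le (by norm_num : (0:ℝ) ≤ 1)] at ht
    have h1 : 0 < 1 + r * t := by nlinarith [ht.1, ht.2]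
    have h2 : 0 < 1 - r * t := by nlinarith [ht.1, ht.2]
    have hden : (1 - t^2*r^2) ≠ 0 := by nlinarith
    have d1 : HasDerivAt (fun t : ℝ => Real.log (1 + r*t)) ((1 + r*t)⁻¹ * r) t := by
      have : HasDerivAt (fun t : ℝ => 1 + r*t) r t := by
        simpa using ((hasDerivAt_id t).const_mul r).const_add 1
      exact (Real.hasDerivAt_log h1.ne').comp t this
    have d2 : HasDerivAt (fun t : ℝ => Real.log (1 - r*t)) (-((1 - r*t)⁻¹ * r)) t := by
      have : HasDerivAt (fun t : ℝ => 1 - r*t) (-r) t := by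
        simpa using ((hasDerivAt_id t).const_mul r).const_sub 1
      refine ((Real.hasDerivAt_log h2.ne').comp t this).congr_deriv ?_; ring
    have := ((d1.sub d2).const_mul (M * (1/2)))
    refine this.congr_deriv ?_
    rw [eq_div_iff hden]
    have e1 : (1 + r*t)⁻¹ * (1 + r*t) = 1 := inv_mul_cancel₀ h1.ne'
    have e2 : (1 - r*t)⁻¹ * (1 - r*t) = 1 := inv_mul_cancel₀ h2.ne'
    linear_combination ((M/2)*r*(1-r*t)) * e1 + ((M/2)*r*(1+r*t)) * e2
  have hFii : IntervalIntegrable (fun t : ℝ => M * r / (1 - t^2*r^2)) volume 0 1 := by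
    apply ContinuousOn.intervalIntegrable_of_Icc (by norm_num)
    apply ContinuousOn.div continuousOn_const
    · fun_prop
    · intro t ht
      have ht2 : t^2 ≤ 1 := by nlinarith [ht.1, ht.2]
      have h1 : t^2*r^2 ≤ r^2 := by nlinarith [sq_nonneg r]
      have h2 : r^2 < 1 := by nlinarith
      intro h; nlinarith
  have ftc2 := intervalIntegral.integral_eq_sub_of_hasDerivAt hFd hFii
  have hFval : F 1 - F 0 = M * (1/2 * Real.log ((1+r)/(1-r))) := by
    simp only [hF]
    rw [Real.log_div (by linarith) (by linarith)]
    simp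
    ring
  -- norm bound
  have hlog0 : 0 ≤ Real.log ((1+r)/(1-r)) :=
    Real.log_nonneg (by rw [le_div_iff₀ (by linarith)]; linarith)
  have hnn : (0:ℝ) ≤ M * (1/2 * Real.log ((1+r)/(1-r))) := by positivity
  have hbd : ‖f z - f 0‖ ≤ M * (1/2 * Real.log ((1+r)/(1-r))) := by
    rw [← ftc]
    have step : ‖∫ y in (0:ℝ)..1, deriv f ((y:ℂ) * z) * z‖ ≤
        |∫ y in (0:ℝ)..1, M * r / (1 - y^2*r^2)| := by
      apply intervalIntegral.norm_integral_le_abs_of_norm_le _ hFii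
      filter_upwards [ae_restrict_mem measurableSet_uIoc] with t ht
      rw [uIoc_of_le (by norm_num : (0:ℝ) ≤ 1)] at ht
      have ht' : t ∈ Icc (0:ℝ) 1 := ⟨le_of_lt ht.1, ht.2⟩
      have hmem' := hmem t ht'
      have htz : ‖(t:ℂ)*z‖ = t * r := by
        rw [norm_mul, Complex.norm_real, Real.norm_eq_abs, _root_.abs_of_nonneg ht'.1]
      have ht2 : t^2 ≤ 1 := by nlinarith [ht'.1, ht'.2]
      have hden : 0 < 1 - t^2*r^2 := by nlinarith [sq_nonneg r]
      have h1 := hM _ hmem'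
      rw [htz] at h1
      rw [norm_mul]
      rw [div_eq_mul_inv]
      calc ‖deriv f ((t:ℂ)*z)‖ * ‖z‖ ≤ (M / (1 - t^2*r^2)) * r := by
            apply mul_le_mul_of_nonneg_right _ hr0
            rw [le_div_iff₀ hden]
            calc ‖deriv f ((t:ℂ)*z)‖ * (1 - t^2*r^2) = (1 - (t*r)^2) * ‖deriv f ((t:ℂ)*z)‖ := by ring
              _ ≤ M := h1
        _ = M * r * (1 - t^2*r^2)⁻¹ := by rw [div_eq_mul_inv]; ring
    calc ‖∫ y in (0:ℝ)..1, deriv f ((y:ℂ) * z) * z‖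
        ≤ |∫ y in (0:ℝ)..1, M * r / (1 - y^2*r^2)| := step
      _ = |F 1 - F 0| := by rw [ftc2]
      _ = M * (1/2 * Real.log ((1+r)/(1-r))) := by rw [hFval]; exact abs_of_nonneg hnn
  calc ‖f z‖ = ‖f 0 + (f z - f 0)‖ := by ring_nf
    _ ≤ ‖f 0‖ + ‖f z - f 0‖ := norm_add_le _ _
    _ ≤ ‖f 0‖ + M * (1/2 * Real.log ((1+r)/(1-r))) := by linarith

lemma log_ratio_bound {w z : ℂ} (hw : ‖w‖ < 1) (hz : ‖z‖ < 1) :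
    Real.log ((1 + ‖moebius w z‖) / (1 - ‖moebius w z‖)) ≤
      4 * Real.log 2 - Real.log (1 - ‖w‖) - Real.log (1 - ‖z‖ ^ 2) := by
  set ρ := ‖moebius w z‖ with hρ
  have hρ0 : 0 ≤ ρ := norm_nonneg _
  have hρ1 : ρ < 1 :=
    mem_ball_zero_iff.mp (mo_mem_ball (mem_ball_zero_iff.mpr hw) (mem_ball_zero_iff.mpr hz))
  have ha : (0:ℝ) < 1 - ρ^2 := by nlinarith
  have hw2 : (0:ℝ) < 1 - ‖w‖^2 := by nlinarith [norm_nonneg w]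
  have hz2 : (0:ℝ) < 1 - ‖z‖^2 := by nlinarith [norm_nonneg z]
  have hd : 1 - (starRingEnd ℂ) w * z ≠ 0 := denom_ne hw hz
  have hdpos : (0:ℝ) < ‖1 - (starRingEnd ℂ) w * z‖^2 := pow_pos (norm_pos_iff.mpr hd) 2
  have step1 : Real.log ((1 + ρ)/(1 - ρ)) ≤ Real.log (4 / (1 - ρ^2)) := by
    apply Real.log_le_log (div_pos (by linarith) (by linarith))
    rw [div_le_div_iff₀ (by linarith) ha]
    nlinarith
  have step2 : Real.log (4 / (1 - ρ^2)) = 2 * Real.log 2 - Real.log (1 - ρ^2) := by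
    rw [Real.log_div (by norm_num) ha.ne', show (4:ℝ) = 2^2 by norm_num, Real.log_pow]
    push_cast; ring
  have step3 : Real.log (1 - ρ^2) =
      Real.log (1 - ‖w‖^2) + Real.log (1 - ‖z‖^2) - Real.log (‖1 - (starRingEnd ℂ) w * z‖^2) := by
    rw [hρ, one_sub_sq_mo hw hz, Real.log_div (by positivity) hdpos.ne',
      Real.log_mul hw2.ne' hz2.ne']
  have hdle : ‖1 - (starRingEnd ℂ) w * z‖^2 ≤ 4 := by
    have h1 : ‖1 - (starRingEnd ℂ) w * z‖ ≤ 2 := by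
      calc ‖1 - (starRingEnd ℂ) w * z‖ ≤ ‖(1:ℂ)‖ + ‖(starRingEnd ℂ) w * z‖ := norm_sub_le _ _
        _ = 1 + ‖w‖ * ‖z‖ := by rw [norm_mul, RCLike.norm_conj, norm_one]
        _ ≤ 2 := by nlinarith [norm_nonneg w, norm_nonneg z]
    nlinarith [norm_nonneg (1 - (starRingEnd ℂ) w * z)]
  have step4 : Real.log (‖1 - (starRingEnd ℂ) w * z‖^2) ≤ 2 * Real.log 2 := by
    calc Real.log (‖1 - (starRingEnd ℂ) w * z‖^2) ≤ Real.log 4 := Real.log_le_log hdpos hdle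
      _ = 2 * Real.log 2 := by
        rw [show (4:ℝ) = 2^2 by norm_num, Real.log_pow]; push_cast; ring
  have step5 : Real.log (1 - ‖w‖) ≤ Real.log (1 - ‖w‖^2) := by
    apply Real.log_le_log (by linarith)
    nlinarith [norm_nonneg w]
  linarith

lemma deriv_pt_bound {f : ℂ → ℂ} {M : ℝ}
    (hM : ∀ x ∈ ball (0:ℂ) 1, (1 - ‖x‖ ^ 2) * ‖deriv f x‖ ≤ M)
    {w z : ℂ} (hw : ‖w‖ < 1) (hz : ‖z‖ < 1) :
    ‖deriv f (moebius w z) * ((((normSq w : ℝ) : ℂ) - 1) / (1 - (starRingEnd ℂ) w * z) ^ 2)‖ ≤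
      M / (1 - ‖z‖ ^ 2) := by
  have hz2 : (0:ℝ) < 1 - ‖z‖^2 := by nlinarith [norm_nonneg z]
  have hmem := mo_mem_ball (mem_ball_zero_iff.mpr hw) (mem_ball_zero_iff.mpr hz)
  have h1 := hM _ hmem
  have h2 := mo_deriv_norm hw hz
  rw [norm_mul, le_div_iff₀ hz2]
  calc ‖deriv f (moebius w z)‖ * ‖(((normSq w : ℝ) : ℂ) - 1) / (1 - (starRingEnd ℂ) w * z) ^ 2‖ *
        (1 - ‖z‖^2)
      = ‖deriv f (moebius w z)‖ *
        ((1 - ‖z‖^2) * ‖(((normSq w : ℝ) : ℂ) - 1) / (1 - (starRingEnd ℂ) w * z) ^ 2‖) := by ring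
    _ = (1 - ‖moebius w z‖^2) * ‖deriv f (moebius w z)‖ := by rw [h2]; ring
    _ ≤ M := h1

lemma conj_cont : Continuous (fun w : ℂ => (starRingEnd ℂ) w) := continuous_star

lemma mo_contOn {z : ℂ} (hz : ‖z‖ < 1) :
    ContinuousOn (fun w => moebius w z) (ball (0:ℂ) 1) := by
  apply ContinuousOn.div
  · exact (continuous_id.sub continuous_const).continuousOn
  · exact (continuous_const.sub (conj_cont.mul continuous_const)).continuousOn
  · intro w hw; exact denom_ne (mem_ball_zero_iff.mp hw) hz

lemma mder_contOn {z : ℂ} (hz : ‖z‖ < 1) :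
    ContinuousOn (fun w => (((normSq w : ℝ) : ℂ) - 1) / (1 - (starRingEnd ℂ) w * z) ^ 2)
      (ball (0:ℂ) 1) := by
  apply ContinuousOn.div
  · exact ((Complex.continuous_ofReal.comp Complex.continuous_normSq).sub
      continuous_const).continuousOn
  · exact ((continuous_const.sub (conj_cont.mul continuous_const)).pow 2).continuousOn
  · intro w hw
    exact pow_ne_zero _ (denom_ne (mem_ball_zero_iff.mp hw) hz)

noncomputable def Fd (K f : ℂ → ℂ) (z w : ℂ) : ℂ :=
  K w * (deriv f (moebius w z) * ((((normSq w : ℝ) : ℂ) - 1) / (1 - (starRingEnd ℂ) w * z) ^ 2))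

theorem hausdorff_bounded_on_bloch (μ : Measure ℂ) (K : ℂ → ℂ)
    (hK : Integrable K (μ.restrict (ball (0:ℂ) 1)))
    (hKlog : Integrable (fun w => K w * Real.log (1 - ‖w‖)) (μ.restrict (ball (0:ℂ) 1)))
    (f : ℂ → ℂ) (hf : DifferentiableOn ℂ f (ball (0:ℂ) 1)) (hfB : BddAbove (blochSet f)) :
    DifferentiableOn ℂ (hausdorffOp μ K f) (ball (0:ℂ) 1) ∧
    BddAbove (blochSet (hausdorffOp μ K f)) ∧
    blochNorm' (hausdorffOp μ K f) ≤
      (∫ w in ball (0:ℂ) 1,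
          ‖K w‖ * (2 + (1 / 2) * Real.log ((1 + ‖w‖) / (1 - ‖w‖))) ∂μ) * blochNorm' f := by
  set M := sSup (blochSet f) with hMdef
  have hM : ∀ x ∈ ball (0:ℂ) 1, (1 - ‖x‖ ^ 2) * ‖deriv f x‖ ≤ M :=
    fun x hx => le_csSup hfB ⟨x, hx, rfl⟩
  have hM0 : 0 ≤ M := by
    have := hM 0 (mem_ball_self one_pos)
    simp at this
    exact le_trans (norm_nonneg _) this
  have hdc : ContinuousOn (deriv f) (ball (0:ℂ) 1) :=
    ((hf.analyticOnNhd isOpen_ball).deriv).continuousOn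
  have hmeas : ∀ z ∈ ball (0:ℂ) 1,
      AEStronglyMeasurable (fun w => K w * f (moebius w z)) (μ.restrict (ball (0:ℂ) 1)) := by
    intro z hz
    refine hK.aestronglyMeasurable.mul (ContinuousOn.aestronglyMeasurable ?_ measurableSet_ball)
    exact hf.continuousOn.comp (mo_contOn (mem_ball_zero_iff.mp hz))
      (fun w hw => mo_mem_ball hw hz)
  have hIK : Integrable (fun w => ‖K w‖) (μ.restrict (ball (0:ℂ) 1)) := hK.norm
  have hIlog : Integrable (fun w => ‖K w‖ * (-Real.log (1 - ‖w‖)))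
      (μ.restrict (ball (0:ℂ) 1)) := by
    refine hKlog.norm.congr ?_
    filter_upwards [ae_restrict_mem measurableSet_ball] with w hw
    have hw' := mem_ball_zero_iff.mp hw
    rw [norm_mul, Complex.norm_real, Real.norm_eq_abs,
      abs_of_nonpos (Real.log_nonpos (by linarith) (by linarith [norm_nonneg w]))]
  have hcomb : ∀ a b : ℝ, Integrable (fun w => ‖K w‖ * (a + b * (-Real.log (1 - ‖w‖))))
      (μ.restrict (ball (0:ℂ) 1)) := by
    intro a b
    refine ((hIK.const_mul a).add (hIlog.const_mul b)).congr ?_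
    exact Filter.Eventually.of_forall fun w => by simp only [Pi.add_apply]; ring
  have hFint : ∀ z ∈ ball (0:ℂ) 1,
      Integrable (fun w => K w * f (moebius w z)) (μ.restrict (ball (0:ℂ) 1)) := by
    intro z hz
    have hz' := mem_ball_zero_iff.mp hz
    refine (hcomb (‖f 0‖ + M * (1/2) * (4 * Real.log 2 - Real.log (1 - ‖z‖^2)))
      (M * (1/2))).mono' (hmeas z hz) ?_
    filter_upwards [ae_restrict_mem measurableSet_ball] with w hw
    have hw' := mem_ball_zero_iff.mp hw
    rw [norm_mul]
    have h1 := bloch_growth hf hM (mo_mem_ball hw hz)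
    have h2 := log_ratio_bound hw' hz'
    have h3 : ‖f (moebius w z)‖ ≤ ‖f 0‖ +
        M * (1/2) * (4 * Real.log 2 - Real.log (1 - ‖w‖) - Real.log (1 - ‖z‖^2)) := by
      nlinarith [mul_le_mul_of_nonneg_left h2 hM0]
    calc ‖K w‖ * ‖f (moebius w z)‖
        ≤ ‖K w‖ * (‖f 0‖ + M * (1/2) * (4 * Real.log 2 - Real.log (1 - ‖w‖)
            - Real.log (1 - ‖z‖^2))) := mul_le_mul_of_nonneg_left h3 (norm_nonneg _)
      _ = ‖K w‖ * ((‖f 0‖ + M * (1/2) * (4 * Real.log 2 - Real.log (1 - ‖z‖^2)))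
            + M * (1/2) * (-Real.log (1 - ‖w‖))) := by ring
  have hF'meas : ∀ z ∈ ball (0:ℂ) 1,
      AEStronglyMeasurable (Fd K f z) (μ.restrict (ball (0:ℂ) 1)) := by
    intro z hz
    have hz' := mem_ball_zero_iff.mp hz
    refine hK.aestronglyMeasurable.mul (ContinuousOn.aestronglyMeasurable ?_ measurableSet_ball)
    exact (hdc.comp (mo_contOn hz') (fun w hw => mo_mem_ball hw hz)).mul (mder_contOn hz')
  have hDeriv : ∀ z₀ ∈ ball (0:ℂ) 1,
      HasDerivAt (hausdorffOp μ K f) (∫ w in ball (0:ℂ) 1, Fd K f z₀ w ∂μ) z₀ := by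
    intro z₀ hz₀
    have hz₀' := mem_ball_zero_iff.mp hz₀
    have hεpos : 0 < (1 - ‖z₀‖)/2 := by linarith
    set ε := (1 - ‖z₀‖)/2 with hε
    set r := (1 + ‖z₀‖)/2 with hrdef
    have hr1 : r < 1 := by rw [hrdef]; linarith
    have hr0 : 0 ≤ r := by rw [hrdef]; positivity
    have hrr : 0 < 1 - r^2 := by nlinarith
    have hsub : ∀ z ∈ ball z₀ ε, ‖z‖ ≤ r ∧ z ∈ ball (0:ℂ) 1 := by
      intro z hzball
      have hd : ‖z - z₀‖ < ε := by
        rw [← dist_eq_norm]; exact mem_ball.mp hzball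
      have h1 : ‖z‖ ≤ ‖z₀‖ + ‖z - z₀‖ := by
        calc ‖z‖ = ‖z₀ + (z - z₀)‖ := by ring_nf
          _ ≤ ‖z₀‖ + ‖z - z₀‖ := norm_add_le _ _
      have h2 : ‖z‖ ≤ r := by rw [hrdef]; rw [hε] at hd; linarith
      exact ⟨h2, mem_ball_zero_iff.mpr (lt_of_le_of_lt h2 hr1)⟩
    have hmeasev : ∀ᶠ z in nhds z₀,
        AEStronglyMeasurable (fun w => K w * f (moebius w z)) (μ.restrict (ball (0:ℂ) 1)) :=
      Filter.eventually_of_mem (isOpen_ball.mem_nhds hz₀) (fun z hz => hmeas z hz)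
    have hbound : ∀ᵐ w ∂(μ.restrict (ball (0:ℂ) 1)), ∀ z ∈ ball z₀ ε,
        ‖Fd K f z w‖ ≤ ‖K w‖ * (M / (1 - r^2)) := by
      filter_upwards [ae_restrict_mem measurableSet_ball] with w hw
      intro z hzb
      obtain ⟨hzr, hzB⟩ := hsub z hzb
      have hz' := mem_ball_zero_iff.mp hzB
      rw [Fd, norm_mul]
      refine mul_le_mul_of_nonneg_left ?_ (norm_nonneg _)
      have hle : 1 - r^2 ≤ 1 - ‖z‖^2 := by nlinarith [norm_nonneg z]
      calc ‖deriv f (moebius w z) *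
            ((((normSq w : ℝ) : ℂ) - 1) / (1 - (starRingEnd ℂ) w * z) ^ 2)‖
          ≤ M / (1 - ‖z‖^2) := deriv_pt_bound hM (mem_ball_zero_iff.mp hw) hz'
        _ ≤ M / (1 - r^2) := by gcongr
    have hdiff : ∀ᵐ w ∂(μ.restrict (ball (0:ℂ) 1)), ∀ z ∈ ball z₀ ε,
        HasDerivAt (fun z => K w * f (moebius w z)) (Fd K f z w) z := by
      filter_upwards [ae_restrict_mem measurableSet_ball] with w hw
      intro z hzb
      obtain ⟨_, hzB⟩ := hsub z hzb
      have hz' := mem_ball_zero_iff.mp hzB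
      have hw' := mem_ball_zero_iff.mp hw
      have hfd : HasDerivAt f (deriv f (moebius w z)) (moebius w z) :=
        (hf.differentiableAt (isOpen_ball.mem_nhds (mo_mem_ball hw hzB))).hasDerivAt
      have hmo := mo_hasDerivAt (denom_ne hw' hz')
      exact (hfd.comp z hmo).const_mul (K w)
    have key := hasDerivAt_integral_of_dominated_loc_of_deriv_le (Metric.ball_mem_nhds z₀ hεpos) hmeasev
      (hFint z₀ hz₀) (hF'meas z₀ hz₀) hbound (hIK.mul_const (M / (1 - r^2))) hdiff
    exact key.2
  have hDiff : DifferentiableOn ℂ (hausdorffOp μ K f) (ball (0:ℂ) 1) :=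
    fun z hz => ((hDeriv z hz).differentiableAt).differentiableWithinAt
  have hderiv_eq : ∀ z ∈ ball (0:ℂ) 1,
      deriv (hausdorffOp μ K f) z = ∫ w in ball (0:ℂ) 1, Fd K f z w ∂μ :=
    fun z hz => (hDeriv z hz).deriv
  set I0 := ∫ w in ball (0:ℂ) 1, ‖K w‖ ∂μ with hI0
  have hsem : ∀ z ∈ ball (0:ℂ) 1,
      (1 - ‖z‖^2) * ‖deriv (hausdorffOp μ K f) z‖ ≤ I0 * M := by
    intro z hz
    have hz' := mem_ball_zero_iff.mp hz
    have hz2 : (0:ℝ) < 1 - ‖z‖^2 := by nlinarith [norm_nonneg z]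
    rw [hderiv_eq z hz]
    have h1 : ‖∫ w in ball (0:ℂ) 1, Fd K f z w ∂μ‖ ≤
        ∫ w in ball (0:ℂ) 1, ‖K w‖ * (M/(1-‖z‖^2)) ∂μ := by
      apply norm_integral_le_of_norm_le (hIK.mul_const _)
      filter_upwards [ae_restrict_mem measurableSet_ball] with w hw
      rw [Fd, norm_mul]
      exact mul_le_mul_of_nonneg_left
        (deriv_pt_bound hM (mem_ball_zero_iff.mp hw) hz') (norm_nonneg _)
    have h2 : ∫ w in ball (0:ℂ) 1, ‖K w‖ * (M/(1-‖z‖^2)) ∂μ = I0 * (M/(1-‖z‖^2)) := by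
      rw [hI0, integral_mul_const]
    calc (1 - ‖z‖^2) * ‖∫ w in ball (0:ℂ) 1, Fd K f z w ∂μ‖
        ≤ (1 - ‖z‖^2) * (I0 * (M/(1-‖z‖^2))) :=
          mul_le_mul_of_nonneg_left (le_trans h1 h2.le) hz2.le
      _ = I0 * M := by
          rw [show (1 - ‖z‖^2) * (I0 * (M/(1-‖z‖^2))) =
              I0 * (M / (1-‖z‖^2) * (1-‖z‖^2)) by ring, div_mul_cancel₀ _ hz2.ne']
  have hbddA : BddAbove (blochSet (hausdorffOp μ K f)) := by
    refine ⟨I0 * M, ?_⟩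
    rintro x ⟨z, hz, rfl⟩
    exact hsem z hz
  have hne : (blochSet (hausdorffOp μ K f)).Nonempty :=
    ⟨_, ⟨0, mem_ball_self one_pos, rfl⟩⟩
  have hsup : sSup (blochSet (hausdorffOp μ K f)) ≤ I0 * M := by
    refine csSup_le hne ?_
    rintro x ⟨z, hz, rfl⟩
    exact hsem z hz
  have h0 : hausdorffOp μ K f 0 = ∫ w in ball (0:ℂ) 1, K w * f w ∂μ := by
    simp [hausdorffOp, moebius]
  have hIlog1 : Integrable (fun w => ‖K w‖ * Real.log (1 + ‖w‖))
      (μ.restrict (ball (0:ℂ) 1)) := by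
    refine (hIK.const_mul (Real.log 2)).mono' ?_ ?_
    · exact hIK.aestronglyMeasurable.mul
        ((Continuous.log (continuous_const.add continuous_norm)
          (fun w => (by positivity : (0:ℝ) < 1 + ‖w‖).ne')).aestronglyMeasurable)
    · filter_upwards [ae_restrict_mem measurableSet_ball] with w hw
      have hw' := mem_ball_zero_iff.mp hw
      have hlnn : 0 ≤ Real.log (1 + ‖w‖) := Real.log_nonneg (by linarith [norm_nonneg w])
      rw [Real.norm_eq_abs, _root_.abs_of_nonneg (mul_nonneg (norm_nonneg _) hlnn)]
      calc ‖K w‖ * Real.log (1 + ‖w‖) ≤ ‖K w‖ * Real.log 2 :=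
            mul_le_mul_of_nonneg_left (Real.log_le_log (by positivity) (by linarith))
              (norm_nonneg _)
        _ = Real.log 2 * ‖K w‖ := by ring
  have hIntL : Integrable (fun w => ‖K w‖ * Real.log ((1 + ‖w‖)/(1 - ‖w‖)))
      (μ.restrict (ball (0:ℂ) 1)) := by
    refine (hIlog1.add hIlog).congr ?_
    filter_upwards [ae_restrict_mem measurableSet_ball] with w hw
    have hw' := mem_ball_zero_iff.mp hw
    simp only [Pi.add_apply]
    rw [Real.log_div (by positivity) (ne_of_gt (show (0:ℝ) < 1 - ‖w‖ by linarith))]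
    ring
  have hcomb2 : ∀ a b : ℝ,
      Integrable (fun w => ‖K w‖ * (a + b * Real.log ((1 + ‖w‖)/(1 - ‖w‖))))
        (μ.restrict (ball (0:ℂ) 1)) := by
    intro a b
    exact ((hIK.const_mul a).add (hIntL.const_mul b)).congr
      (Filter.Eventually.of_forall fun w => by simp only [Pi.add_apply]; ring)
  have hInt2 : Integrable
      (fun w => ‖K w‖ * (‖f 0‖ + M * (1/2 * Real.log ((1 + ‖w‖)/(1 - ‖w‖)))))
      (μ.restrict (ball (0:ℂ) 1)) :=
    (hcomb2 (‖f 0‖) (M * (1/2))).congr (Filter.Eventually.of_forall fun w => by simp only [Pi.add_apply]; ring)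
  have h0b : ‖hausdorffOp μ K f 0‖ ≤
      ∫ w in ball (0:ℂ) 1, ‖K w‖ * (‖f 0‖ + M * (1/2 * Real.log ((1 + ‖w‖)/(1 - ‖w‖)))) ∂μ := by
    rw [h0]
    apply norm_integral_le_of_norm_le hInt2
    filter_upwards [ae_restrict_mem measurableSet_ball] with w hw
    rw [norm_mul]
    exact mul_le_mul_of_nonneg_left (bloch_growth hf hM hw) (norm_nonneg _)
  refine ⟨hDiff, hbddA, ?_⟩
  have hIntMK : Integrable (fun w => ‖K w‖ * M) (μ.restrict (ball (0:ℂ) 1)) := hIK.mul_const M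
  have hInt3 : Integrable
      (fun w => ‖K w‖ * (2 + 1/2 * Real.log ((1 + ‖w‖)/(1 - ‖w‖))) * (M + ‖f 0‖))
      (μ.restrict (ball (0:ℂ) 1)) :=
    (hcomb2 (2*(M + ‖f 0‖)) ((M + ‖f 0‖)*(1/2))).congr (Filter.Eventually.of_forall fun w => by simp only [Pi.add_apply]; ring)
  have step2 : I0 * M +
      (∫ w in ball (0:ℂ) 1, ‖K w‖ * (‖f 0‖ + M * (1/2 * Real.log ((1 + ‖w‖)/(1 - ‖w‖)))) ∂μ) =
      ∫ w in ball (0:ℂ) 1, (‖K w‖ * M +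
        ‖K w‖ * (‖f 0‖ + M * (1/2 * Real.log ((1 + ‖w‖)/(1 - ‖w‖))))) ∂μ := by
    rw [integral_add hIntMK hInt2, hI0, integral_mul_const]
  have step3 : (∫ w in ball (0:ℂ) 1, (‖K w‖ * M +
        ‖K w‖ * (‖f 0‖ + M * (1/2 * Real.log ((1 + ‖w‖)/(1 - ‖w‖))))) ∂μ) ≤
      ∫ w in ball (0:ℂ) 1,
        ‖K w‖ * (2 + 1/2 * Real.log ((1 + ‖w‖)/(1 - ‖w‖))) * (M + ‖f 0‖) ∂μ := by
    refine integral_mono_ae (hIntMK.add hInt2) hInt3 ?_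
    filter_upwards [ae_restrict_mem measurableSet_ball] with w hw
    have hw' := mem_ball_zero_iff.mp hw
    have hL0 : 0 ≤ Real.log ((1 + ‖w‖)/(1 - ‖w‖)) := by
      apply Real.log_nonneg
      rw [le_div_iff₀ (by linarith)]
      linarith [norm_nonneg w]
    have hK0 : (0:ℝ) ≤ ‖K w‖ := norm_nonneg _
    have hf0 : (0:ℝ) ≤ ‖f 0‖ := norm_nonneg _
    nlinarith [mul_nonneg hK0 hM0, mul_nonneg hK0 hf0,
      mul_nonneg (mul_nonneg hK0 hL0) hf0]
  have step4 : (∫ w in ball (0:ℂ) 1,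
        ‖K w‖ * (2 + 1/2 * Real.log ((1 + ‖w‖)/(1 - ‖w‖))) * (M + ‖f 0‖) ∂μ) =
      (∫ w in ball (0:ℂ) 1, ‖K w‖ * (2 + 1/2 * Real.log ((1 + ‖w‖)/(1 - ‖w‖))) ∂μ) *
        (M + ‖f 0‖) := integral_mul_const _ _
  have hbf : blochNorm' f = M + ‖f 0‖ := rfl
  have hbH : blochNorm' (hausdorffOp μ K f) =
      sSup (blochSet (hausdorffOp μ K f)) + ‖hausdorffOp μ K f 0‖ := rfl
  rw [hbf, hbH]
  calc sSup (blochSet (hausdorffOp μ K f)) + ‖hausdorffOp μ K f 0‖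
      ≤ I0 * M + (∫ w in ball (0:ℂ) 1,
          ‖K w‖ * (‖f 0‖ + M * (1/2 * Real.log ((1 + ‖w‖)/(1 - ‖w‖)))) ∂μ) :=
        add_le_add hsup h0b
    _ = ∫ w in ball (0:ℂ) 1, (‖K w‖ * M +
          ‖K w‖ * (‖f 0‖ + M * (1/2 * Real.log ((1 + ‖w‖)/(1 - ‖w‖))))) ∂μ := step2
    _ ≤ ∫ w in ball (0:ℂ) 1,
          ‖K w‖ * (2 + 1/2 * Real.log ((1 + ‖w‖)/(1 - ‖w‖))) * (M + ‖f 0‖) ∂μ := step3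
    _ = (∫ w in ball (0:ℂ) 1, ‖K w‖ * (2 + 1/2 * Real.log ((1 + ‖w‖)/(1 - ‖w‖))) ∂μ) *
          (M + ‖f 0‖) := step4
end

section
/- For g holomorphic in a neighborhood of the closed unit disc, w in the open unit disc with w ≠ 0, and n ∈ ℕ, one has (1/2π)∫_0^{2π} ((w·e^{it} - 1)/(e^{it} - conj(w)))^n · g(e^{it}) dt = g(0)/conj(w)^n + res_{z=conj(w)} (((wz-1)/(z-conj(w)))^n · g(z)/z). -/
open Complex Metric Set Real

theorem myCircleIntegral_add {f g : ℂ → ℂ} {c : ℂ} {R : ℝ} (hf : CircleIntegrable f c R)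
    (hg : CircleIntegrable g c R) :
    (∮ z in C(c, R), (f z + g z)) = (∮ z in C(c, R), f z) + ∮ z in C(c, R), g z := by
  simp only [circleIntegral, smul_add, intervalIntegral.integral_add hf.out hg.out]

theorem myCircleIntegral_sum {n : ℕ} (f : ℕ → ℂ → ℂ) {c : ℂ} {R : ℝ}
    (h : ∀ i ∈ Finset.range n, CircleIntegrable (f i) c R) :
    (∮ z in C(c, R), ∑ i ∈ Finset.range n, f i z)
      = ∑ i ∈ Finset.range n, ∮ z in C(c, R), f i z := by
  simp only [circleIntegral, Finset.smul_sum]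
  exact intervalIntegral.integral_finset_sum (fun i hi => (h i hi).out)

theorem taylor_dslope (c : ℂ) : ∀ (n : ℕ) (f : ℂ → ℂ) (z : ℂ),
    f z = (∑ i ∈ Finset.range n, ((fun h => dslope h c)^[i] f) c * (z - c) ^ i)
      + (z - c) ^ n * ((fun h => dslope h c)^[n] f) z := by
  intro n
  induction n with
  | zero => simp
  | succ n ih =>
    intro f z
    have h0 : f z = f c + (z - c) * dslope f c z := by
      have h := sub_smul_dslope f c z
      rw [smul_eq_mul] at h
      linear_combination -h
    rw [h0, ih (dslope f c) z, Finset.sum_range_succ']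
    simp only [Function.iterate_succ_apply, Function.iterate_zero_apply, pow_zero, mul_one,
      pow_succ]
    have hs : (z - c) * (∑ x ∈ Finset.range n, (fun h => dslope h c)^[x] (dslope f c) c * (z - c) ^ x)
        = ∑ x ∈ Finset.range n, (fun h => dslope h c)^[x] (dslope f c) c * ((z - c) ^ x * (z - c)) := by
      rw [Finset.mul_sum]
      exact Finset.sum_congr rfl fun i _ => by ring
    rw [mul_add, hs]
    ring

theorem dslope_iterate_diffOn {U : Set ℂ} (hU : IsOpen U) {c : ℂ} (hc : c ∈ U) {f : ℂ → ℂ}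
    (hf : DifferentiableOn ℂ f U) (n : ℕ) :
    DifferentiableOn ℂ ((fun h => dslope h c)^[n] f) U := by
  induction n with
  | zero => exact hf
  | succ n ih =>
    rw [Function.iterate_succ_apply']
    exact (differentiableOn_dslope (hU.mem_nhds hc)).mpr ih

theorem pf_decomp (c : ℂ) (hc : c ≠ 0) : ∀ n : ℕ, ∃ B : ℕ → ℂ, ∀ z : ℂ, z ≠ 0 → z ≠ c →
    ((z - c) ^ n * z)⁻¹
      = (-c)⁻¹ ^ n * z⁻¹ + ∑ j ∈ Finset.range n, B j * (z - c) ^ (-(j:ℤ) - 1) := by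
  intro n
  induction n with
  | zero => exact ⟨0, by simp⟩
  | succ n ih =>
    obtain ⟨B, hB⟩ := ih
    refine ⟨fun j => Nat.casesOn j ((-c)⁻¹ ^ n * c⁻¹) B, fun z hz0 hzc => ?_⟩
    have hzc' : z - c ≠ 0 := sub_ne_zero.2 hzc
    have key : ((z - c) ^ (n+1) * z)⁻¹ = ((z - c) ^ n * z)⁻¹ * (z - c)⁻¹ := by
      rw [pow_succ]
      field_simp
    have hterm : ∀ j : ℕ, (B j * (z - c) ^ (-(j:ℤ) - 1)) * (z - c)⁻¹
        = B j * (z - c) ^ (-((j+1:ℕ):ℤ) - 1) := by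
      intro j
      have he : (-((j+1:ℕ):ℤ) - 1) = (-(j:ℤ) - 1) + (-1) := by push_cast; ring
      rw [mul_assoc, he, zpow_add₀ hzc', zpow_neg_one]
    have hsplit : z⁻¹ * (z - c)⁻¹ = c⁻¹ * ((z - c)⁻¹ - z⁻¹) := by
      field_simp
      ring
    rw [key, hB z hz0 hzc, Finset.sum_range_succ']
    rw [add_mul, Finset.sum_mul, Finset.sum_congr rfl (fun j _ => hterm j)]
    have h0e : (z - c) ^ (-((0:ℕ):ℤ) - 1) = (z - c)⁻¹ := by norm_num
    rw [h0e, pow_succ, inv_neg, mul_assoc, hsplit]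
    have hred : ∑ x ∈ Finset.range n,
        (fun j => (Nat.casesOn j ((-c)⁻¹ ^ n * c⁻¹) B : ℂ)) (x+1) * (z - c) ^ (-((x+1:ℕ):ℤ) - 1)
        = ∑ x ∈ Finset.range n, B x * (z - c) ^ (-((x+1:ℕ):ℤ) - 1) :=
      Finset.sum_congr rfl fun x _ => rfl
    rw [hred]
    norm_num
    ring

theorem circle_decomp (c₀ : ℂ) (R : ℝ) (hR : 0 ≤ R) (c D : ℂ) (E : ℕ → ℂ) (n : ℕ) (Ψ : ℂ → ℂ)
    (hΨc : CircleIntegrable Ψ c₀ R) (h0 : (0:ℂ) ∉ sphere c₀ R) (hcs : c ∉ sphere c₀ R) :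
    (∮ z in C(c₀,R), ((D * z⁻¹ + ∑ j ∈ Finset.range n, E j * (z - c) ^ (-(j:ℤ)-1)) + Ψ z))
      = D * (∮ z in C(c₀,R), z⁻¹)
        + (∑ j ∈ Finset.range n, E j * ∮ z in C(c₀,R), (z - c) ^ (-(j:ℤ)-1))
        + (∮ z in C(c₀,R), Ψ z) := by
  have hzpowc : ∀ j : ℕ, ContinuousOn (fun z : ℂ => (z - c) ^ (-(j:ℤ)-1)) (sphere c₀ R) := fun j =>
    (continuousOn_id.sub continuousOn_const).zpow₀ _
      (fun z hz => Or.inl (sub_ne_zero.2 (ne_of_mem_of_not_mem hz hcs)))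
  have hinvc : ContinuousOn (fun z : ℂ => z⁻¹) (sphere c₀ R) :=
    ContinuousOn.inv₀ continuousOn_id (fun z hz => ne_of_mem_of_not_mem hz h0)
  have h1 : CircleIntegrable (fun z : ℂ => D * z⁻¹) c₀ R :=
    (continuousOn_const.mul hinvc).circleIntegrable hR
  have h2 : CircleIntegrable (fun z : ℂ => ∑ j ∈ Finset.range n, E j * (z - c) ^ (-(j:ℤ)-1)) c₀ R :=
    (continuousOn_finset_sum _ (fun j _ => continuousOn_const.mul (hzpowc j))).circleIntegrable hR
  have e1 : (∮ z in C(c₀,R), ((D * z⁻¹ + ∑ j ∈ Finset.range n, E j * (z - c) ^ (-(j:ℤ)-1)) + Ψ z))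
      = (∮ z in C(c₀,R), (D * z⁻¹ + ∑ j ∈ Finset.range n, E j * (z - c) ^ (-(j:ℤ)-1)))
        + ∮ z in C(c₀,R), Ψ z :=
    myCircleIntegral_add (h1.add h2) hΨc
  have e2 : (∮ z in C(c₀,R), (D * z⁻¹ + ∑ j ∈ Finset.range n, E j * (z - c) ^ (-(j:ℤ)-1)))
      = (∮ z in C(c₀,R), D * z⁻¹)
        + ∮ z in C(c₀,R), ∑ j ∈ Finset.range n, E j * (z - c) ^ (-(j:ℤ)-1) :=
    myCircleIntegral_add h1 h2
  rw [e1, e2, circleIntegral.integral_const_mul,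
    myCircleIntegral_sum (f := fun j z => E j * (z - c) ^ (-(j:ℤ)-1))
      (fun j _ => (continuousOn_const.mul (hzpowc j)).circleIntegrable hR)]
  congr 2
  exact Finset.sum_congr rfl fun j _ => circleIntegral.integral_const_mul _ _ _ _

theorem boundary_integral_residue (g : ℂ → ℂ) (U : Set ℂ) (hU : IsOpen U)
    (hsub : closedBall (0:ℂ) 1 ⊆ U) (hg : DifferentiableOn ℂ g U)
    (w : ℂ) (hw0 : w ≠ 0) (hw : ‖w‖ < 1) (n : ℕ)
    (r : ℝ) (hr0 : 0 < r) (hr1 : r < ‖w‖) (hr2 : r ≤ 1 - ‖w‖) :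
    ((2 * π : ℝ) : ℂ)⁻¹ *
        ∫ t in (0:ℝ)..(2 * π),
          ((w * Complex.exp (t * Complex.I) - 1) /
              (Complex.exp (t * Complex.I) - (starRingEnd ℂ) w)) ^ n *
            g (Complex.exp (t * Complex.I)) =
      g 0 / ((starRingEnd ℂ) w) ^ n +
        (2 * π * Complex.I)⁻¹ *
          ∮ z in C((starRingEnd ℂ) w, r),
            ((w * z - 1) / (z - (starRingEnd ℂ) w)) ^ n * g z / z := by
  set c : ℂ := (starRingEnd ℂ) w with hcdef
  have hc0 : c ≠ 0 := by
    simp only [hcdef, ne_eq, map_eq_zero]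
    exact hw0
  have hcnorm : ‖c‖ = ‖w‖ := by simp [hcdef]
  have hcball : c ∈ ball (0:ℂ) 1 := by
    simp only [mem_ball, dist_zero_right]
    rw [hcnorm]; exact hw
  have hcball2 : c ∈ ball c r := by simp [hr0]
  have h0U : (0:ℂ) ∈ U := hsub (by simp)
  have hcU : c ∈ U := hsub (ball_subset_closedBall hcball)
  have hball21 : closedBall c r ⊆ closedBall (0:ℂ) 1 := by
    apply closedBall_subset_closedBall'
    rw [dist_zero_right, hcnorm]
    linarith
  have hsph1 : ∀ z ∈ sphere (0:ℂ) 1, z ≠ 0 ∧ z ≠ c := by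
    intro z hz
    rw [mem_sphere_iff_norm, sub_zero] at hz
    constructor
    · intro h; rw [h] at hz; simp at hz
    · intro h; rw [h, hcnorm] at hz; linarith
  have hsph2 : ∀ z ∈ sphere c r, z ≠ 0 ∧ z ≠ c := by
    intro z hz
    rw [mem_sphere_iff_norm] at hz
    constructor
    · intro h
      rw [h, show ‖(0:ℂ)-c‖ = ‖c‖ by simp, hcnorm] at hz
      linarith
    · intro h
      rw [h] at hz
      simp at hz
      linarith
  have h0sph2 : (0:ℂ) ∉ sphere c r := fun h => (hsph2 0 h).1 rfl
  have hcsph1 : c ∉ sphere (0:ℂ) 1 := fun h => (hsph1 c h).2 rfl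
  have hcsph2 : c ∉ sphere c r := fun h => (hsph2 c h).2 rfl
  have h0sph1 : (0:ℂ) ∉ sphere (0:ℂ) 1 := fun h => (hsph1 0 h).1 rfl
  -- the functions
  set Φ : ℂ → ℂ := fun z => (w*z - 1)^n * g z with hΦdef
  have hΦ : DifferentiableOn ℂ Φ U :=
    (((differentiable_id.const_mul w).sub_const 1).pow n).differentiableOn.mul hg
  set Φ₁ : ℂ → ℂ := dslope Φ 0 with hΦ₁def
  have hΦ₁ : DifferentiableOn ℂ Φ₁ U := (differentiableOn_dslope (hU.mem_nhds h0U)).mpr hΦ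
  set Ψ : ℂ → ℂ := (fun h => dslope h c)^[n] Φ₁ with hΨdef
  have hΨ : DifferentiableOn ℂ Ψ U := dslope_iterate_diffOn hU hcU hΦ₁ n
  set A : ℕ → ℂ := fun i => ((fun h => dslope h c)^[i] Φ₁) c with hAdef
  obtain ⟨B, hB⟩ := pf_decomp c hc0 n
  set D : ℂ := g 0 / c^n with hDdef
  set E : ℕ → ℂ := fun j => Φ 0 * B j + A (n - 1 - j) with hEdef
  set S : ℂ → ℂ := fun z =>
    (D * z⁻¹ + ∑ j ∈ Finset.range n, E j * (z - c) ^ (-(j:ℤ)-1)) + Ψ z with hSdef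
  have htay : ∀ z : ℂ, Φ₁ z = (∑ i ∈ Finset.range n, A i * (z - c) ^ i) + (z - c) ^ n * Ψ z := by
    intro z
    rw [hAdef, hΨdef]
    exact taylor_dslope c n Φ₁ z
  -- the pointwise identity away from 0 and c
  have hkey : ∀ z : ℂ, z ≠ 0 → z ≠ c → ((w*z - 1)/(z - c))^n * g z / z = S z := by
    intro z hz0 hzc
    have hzc' : z - c ≠ 0 := sub_ne_zero.2 hzc
    have hzn : (z - c)^n ≠ 0 := pow_ne_zero _ hzc'
    have hΦz : Φ z = Φ 0 + z * Φ₁ z := by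
      have h := sub_smul_dslope Φ 0 z
      rw [smul_eq_mul, sub_zero] at h
      rw [hΦ₁def]
      linear_combination -h
    have hPF := hB z hz0 hzc
    have hD : D = Φ 0 * (-c)⁻¹ ^ n := by
      rw [hDdef, hΦdef]
      simp only [mul_zero, zero_sub, inv_neg]
      have key2 : ((-1:ℂ))^n * (-c⁻¹)^n = (c^n)⁻¹ := by
        rw [← mul_pow]
        have h3 : (-1:ℂ) * -c⁻¹ = c⁻¹ := by ring
        rw [h3, inv_pow]
      rw [div_eq_mul_inv, ← key2]
      ring
    have hsum2 : (∑ i ∈ Finset.range n, A i * (z - c) ^ i) * ((z - c)^n)⁻¹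
        = ∑ j ∈ Finset.range n, A (n - 1 - j) * (z - c) ^ (-(j:ℤ)-1) := by
      rw [Finset.sum_mul, ← Finset.sum_range_reflect]
      refine Finset.sum_congr rfl fun j hj => ?_
      rw [Finset.mem_range] at hj
      rw [mul_assoc]
      congr 1
      rw [← zpow_natCast (z - c) (n - 1 - j), ← zpow_natCast (z - c) n, ← zpow_neg,
        ← zpow_add₀ hzc']
      congr 1
      omega
    calc ((w*z - 1)/(z - c))^n * g z / z
        = Φ z * ((z - c)^n * z)⁻¹ := by
          rw [hΦdef, div_pow]
          simp only [div_eq_mul_inv, mul_inv]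
          ring
      _ = Φ 0 * ((z - c)^n * z)⁻¹ + Φ₁ z * ((z - c)^n)⁻¹ := by
          rw [hΦz, mul_inv]
          field_simp
      _ = Φ 0 * ((-c)⁻¹ ^ n * z⁻¹ + ∑ j ∈ Finset.range n, B j * (z - c) ^ (-(j:ℤ) - 1))
            + ((∑ i ∈ Finset.range n, A i * (z - c) ^ i) + (z - c) ^ n * Ψ z) * ((z - c)^n)⁻¹ := by
          rw [hPF, ← htay z]
      _ = (Φ 0 * (-c)⁻¹ ^ n) * z⁻¹
            + ((∑ j ∈ Finset.range n, (Φ 0 * B j) * (z - c) ^ (-(j:ℤ) - 1))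
              + ∑ j ∈ Finset.range n, A (n - 1 - j) * (z - c) ^ (-(j:ℤ)-1))
            + Ψ z := by
          rw [mul_add, Finset.mul_sum, add_mul, hsum2]
          have hcan : (z - c) ^ n * Ψ z * ((z - c)^n)⁻¹ = Ψ z := by
            field_simp
          rw [hcan]
          have hsc : ∑ j ∈ Finset.range n, Φ 0 * (B j * (z - c) ^ (-(j:ℤ) - 1))
              = ∑ j ∈ Finset.range n, (Φ 0 * B j) * (z - c) ^ (-(j:ℤ) - 1) :=
            Finset.sum_congr rfl fun j _ => by ring
          rw [hsc]
          ring
      _ = S z := by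
          simp only [hSdef]
          have hse : ∑ j ∈ Finset.range n, E j * (z - c) ^ (-(j:ℤ)-1)
              = (∑ j ∈ Finset.range n, (Φ 0 * B j) * (z - c) ^ (-(j:ℤ) - 1))
                + ∑ j ∈ Finset.range n, A (n - 1 - j) * (z - c) ^ (-(j:ℤ)-1) := by
            rw [← Finset.sum_add_distrib]
            exact Finset.sum_congr rfl fun j _ => by rw [hEdef]; ring
          rw [hse]
          rw [hD]
  -- congruence on both circles
  have hEq1 : (∮ z in C((0:ℂ),(1:ℝ)), ((w*z - 1)/(z - c))^n * g z / z)
      = ∮ z in C((0:ℂ),(1:ℝ)),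
          ((D * z⁻¹ + ∑ j ∈ Finset.range n, E j * (z - c) ^ (-(j:ℤ)-1)) + Ψ z) :=
    circleIntegral.integral_congr zero_le_one fun z hz => by
      rw [hkey z (hsph1 z hz).1 (hsph1 z hz).2]
  have hEq2 : (∮ z in C(c,r), ((w*z - 1)/(z - c))^n * g z / z)
      = ∮ z in C(c,r),
          ((D * z⁻¹ + ∑ j ∈ Finset.range n, E j * (z - c) ^ (-(j:ℤ)-1)) + Ψ z) :=
    circleIntegral.integral_congr hr0.le fun z hz => by
      rw [hkey z (hsph2 z hz).1 (hsph2 z hz).2]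
  have hΨint1 : CircleIntegrable Ψ 0 1 :=
    (hΨ.continuousOn.mono (fun z hz => hsub (sphere_subset_closedBall hz))).circleIntegrable
      zero_le_one
  have hΨint2 : CircleIntegrable Ψ c r :=
    (hΨ.continuousOn.mono
      (fun z hz => hsub (hball21 (sphere_subset_closedBall hz)))).circleIntegrable hr0.le
  -- component integrals
  have hinv1 : (∮ z in C((0:ℂ),(1:ℝ)), z⁻¹) = 2 * π * Complex.I := by
    have h := circleIntegral.integral_sub_inv_of_mem_ball
      (show (0:ℂ) ∈ ball (0:ℂ) 1 by simp)
    simpa using h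
  have h0notin : ∀ z ∈ closedBall c r, z ≠ (0:ℂ) := by
    intro z hz h
    rw [h, mem_closedBall] at hz
    rw [show dist (0:ℂ) c = ‖c‖ by simp [dist_eq_norm], hcnorm] at hz
    linarith
  have hinv2 : (∮ z in C(c,r), z⁻¹) = 0 := by
    apply Complex.circleIntegral_eq_zero_of_differentiable_on_off_countable hr0.le countable_empty
    · exact ContinuousOn.inv₀ continuousOn_id (fun z hz => h0notin z hz)
    · intro z hz
      exact differentiableAt_inv (h0notin z (ball_subset_closedBall hz.1))
  have hVeq : ∀ j : ℕ, (∮ z in C((0:ℂ),(1:ℝ)), (z - c) ^ (-(j:ℤ)-1))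
      = ∮ z in C(c,r), (z - c) ^ (-(j:ℤ)-1) := by
    intro j
    match j with
    | 0 =>
      have e0 : (-((0:ℕ):ℤ)-1) = (-1 : ℤ) := by norm_num
      simp only [e0, zpow_neg_one]
      rw [circleIntegral.integral_sub_inv_of_mem_ball hcball,
        circleIntegral.integral_sub_inv_of_mem_ball hcball2]
    | (j+1) =>
      have hne : (-((j+1:ℕ):ℤ) - 1) ≠ -1 := by push_cast; omega
      rw [circleIntegral.integral_sub_zpow_of_ne hne, circleIntegral.integral_sub_zpow_of_ne hne]
  have hΨ0 : ∀ (c₀ : ℂ) (R : ℝ), 0 ≤ R → closedBall c₀ R ⊆ U → (∮ z in C(c₀,R), Ψ z) = 0 := by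
    intro c₀ R hR hsubU
    apply Complex.circleIntegral_eq_zero_of_differentiable_on_off_countable hR countable_empty
      (hΨ.continuousOn.mono hsubU)
    intro z hz
    exact hΨ.differentiableAt (hU.mem_nhds (hsubU (ball_subset_closedBall hz.1)))
  -- combine
  have hmain : (∮ z in C((0:ℂ),(1:ℝ)), ((w*z - 1)/(z - c))^n * g z / z)
      = 2 * π * Complex.I * D + ∮ z in C(c,r), ((w*z - 1)/(z - c))^n * g z / z := by
    rw [hEq1, hEq2]
    rw [circle_decomp 0 1 zero_le_one c D E n Ψ hΨint1 h0sph1 hcsph1,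
      circle_decomp c r hr0.le c D E n Ψ hΨint2 h0sph2 hcsph2,
      hinv1, hinv2, hΨ0 0 1 zero_le_one hsub, hΨ0 c r hr0.le (hball21.trans hsub)]
    have hs : (∑ j ∈ Finset.range n, E j * ∮ z in C((0:ℂ),(1:ℝ)), (z - c) ^ (-(j:ℤ)-1))
        = ∑ j ∈ Finset.range n, E j * ∮ z in C(c,r), (z - c) ^ (-(j:ℤ)-1) :=
      Finset.sum_congr rfl fun j _ => by rw [hVeq j]
    rw [hs]
    ring
  -- convert LHS to the circle integral
  have hL : (∮ z in C((0:ℂ),(1:ℝ)), ((w*z - 1)/(z - c))^n * g z / z)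
      = Complex.I * ∫ t in (0:ℝ)..(2*π),
          ((w * Complex.exp (t * Complex.I) - 1) / (Complex.exp (t * Complex.I) - c)) ^ n *
            g (Complex.exp (t * Complex.I)) := by
    simp only [circleIntegral, deriv_circleMap, circleMap, ofReal_one, zero_add, one_mul,
      smul_eq_mul]
    rw [← intervalIntegral.integral_const_mul]
    apply intervalIntegral.integral_congr
    intro θ _
    have he : Complex.exp (θ * Complex.I) ≠ 0 := Complex.exp_ne_zero _
    beta_reduce
    rw [div_eq_mul_inv]
    linear_combination Complex.I * (((w * Complex.exp (θ * Complex.I) - 1) /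
      (Complex.exp (θ * Complex.I) - c)) ^ n * g (Complex.exp (θ * Complex.I))) *
      mul_inv_cancel₀ he
  rw [hL] at hmain
  have hπ : (π:ℂ) ≠ 0 := ofReal_ne_zero.mpr Real.pi_ne_zero
  have hT : (∫ t in (0:ℝ)..(2*π),
      ((w * Complex.exp (t * Complex.I) - 1) / (Complex.exp (t * Complex.I) - c)) ^ n *
        g (Complex.exp (t * Complex.I)))
      = -Complex.I * (2 * π * Complex.I * D
          + ∮ z in C(c,r), ((w*z - 1)/(z - c))^n * g z / z) := by
    linear_combination (-Complex.I) * hmain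
      + (∫ t in (0:ℝ)..(2*π),
          ((w * Complex.exp (t * Complex.I) - 1) / (Complex.exp (t * Complex.I) - c)) ^ n *
            g (Complex.exp (t * Complex.I))) * Complex.I_mul_I
  rw [hT]
  have h2 : ((2 * π : ℝ) : ℂ) = 2 * (π:ℂ) := by push_cast; ring
  rw [h2]
  have hinv : (2 * (π:ℂ) * Complex.I)⁻¹ = -Complex.I * (2 * (π:ℂ))⁻¹ := by
    rw [mul_inv, Complex.inv_I]; ring
  have hπ2 : (2 * (π:ℂ)) * (2 * (π:ℂ))⁻¹ = 1 := mul_inv_cancel₀ (mul_ne_zero two_ne_zero hπ)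
  rw [hinv, hDdef]
  linear_combination (-(g 0 / c ^ n) * (2 * (π:ℂ))⁻¹ * (2 * (π:ℂ))) * Complex.I_mul_I
    + (g 0 / c ^ n) * hπ2
end
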